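/- arXiv:math/0505276 — 4 statements merged into one kernel-verified Lean document; each statement's English description precedes it below -/
import Mathlib

section
/- Let E ⊆ ℝ^m be measurable with positive upper Banach density, and let φ(u) = min(1, dist(u, E)). If S_n is a sequence of cubes with m(S_n ∩ E)/m(S_n) → D̄(E) > 0, and μ is any weak* limit of the measures μ_n(f) = (1/m(S_n)) ∫_{S_n} f(T_v φ) dv on the orbit-closure space X⁰ of φ, then for every natural number l, ∫_X (1 − f₀(ψ))^l dμ(ψ) ≥ D̄(E), where f₀(ψ) = ψ(0). Consequently μ(Ẽ) ≥ D̄(E) > 0, where Ẽ = {ψ ∈ X⁰ : ψ(0) = 0}. -/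
open MeasureTheory Filter

/-- The Borel σ-algebra on the space of continuous functions on `ℝ^m` (with the compact-open
topology, i.e. uniform convergence on bounded sets). -/
noncomputable instance (m : ℕ) : MeasurableSpace C(Fin m → ℝ, ℝ) := borel _

instance (m : ℕ) : BorelSpace C(Fin m → ℝ, ℝ) := ⟨rfl⟩

/-- Furstenberg–Katznelson–Weiss correspondence, first half: if `S_n` are cubes along which the
relative density of `E` tends to `D̄(E) = D > 0` and `μ` is a weak* limit of the orbital
averages `μ_n(f) = (1/m(S_n)) ∫_{S_n} f(T_v φ) dv` (where `φ(u) = min(1, dist(u,E))` and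
`T_vψ(u) = ψ(u+v)`), then `∫ (1−f₀(ψ))^l dμ ≥ D` for all `l`, and hence
`μ(Ẽ) ≥ D > 0` for `Ẽ = {ψ : ψ(0) = 0}`. -/
theorem stmt0 (m : ℕ) (E : Set (Fin m → ℝ)) (hE : MeasurableSet E)
    (φ : C(Fin m → ℝ, ℝ)) (hφ : ∀ u, φ u = min 1 (Metric.infDist u E))
    (T : (Fin m → ℝ) → C(Fin m → ℝ, ℝ) → C(Fin m → ℝ, ℝ))
    (hT : ∀ v ψ u, T v ψ u = ψ (u + v))
    (S : ℕ → Set (Fin m → ℝ))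
    (hS : ∀ n, ∃ a r, 0 < r ∧ S n = Set.Icc a (a + fun _ => r))
    (D : ℝ) (hD : 0 < D)
    (hdens : Tendsto (fun n => (volume (S n ∩ E)).toReal / (volume (S n)).toReal)
      atTop (nhds D))
    (μ : Measure C(Fin m → ℝ, ℝ)) [IsProbabilityMeasure μ]
    (hsupp : μ (closure (Set.range fun v => T v φ))ᶜ = 0)
    (hweak : ∀ f : C(Fin m → ℝ, ℝ) → ℝ, Continuous f → (∃ C, ∀ ψ, |f ψ| ≤ C) →
      Tendsto (fun n => (volume (S n)).toReal⁻¹ * ∫ v in S n, f (T v φ))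
        atTop (nhds (∫ ψ, f ψ ∂μ)))
    (l : ℕ) :
    D ≤ ∫ ψ, (1 - ψ 0) ^ l ∂μ ∧
      ENNReal.ofReal D ≤ μ {ψ : C(Fin m → ℝ, ℝ) | ψ 0 = 0} := by
  classical
  set c : ℝ → ℝ := fun x => min 1 (max 0 x) with hc
  have hc_cont : Continuous c := continuous_const.min (continuous_const.max continuous_id)
  have hc01 : ∀ x, 0 ≤ c x ∧ c x ≤ 1 := fun x =>
    ⟨le_min one_pos.le (le_max_left 0 x), min_le_left _ _⟩
  have hφ01 : ∀ u, 0 ≤ φ u ∧ φ u ≤ 1 := by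
    intro u; rw [hφ u]
    exact ⟨le_min one_pos.le Metric.infDist_nonneg, min_le_left _ _⟩
  have heval : Continuous fun ψ : C(Fin m → ℝ, ℝ) => ψ 0 :=
    continuous_eval_const 0
  -- key estimate for all powers
  have key : ∀ k : ℕ, D ≤ ∫ ψ, (1 - c (ψ 0)) ^ k ∂μ := by
    intro k
    set g : C(Fin m → ℝ, ℝ) → ℝ := fun ψ => (1 - c (ψ 0)) ^ k with hg
    have hg_cont : Continuous g := (continuous_const.sub (hc_cont.comp heval)).pow k
    have hg01 : ∀ ψ, 0 ≤ g ψ ∧ g ψ ≤ 1 := by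
      intro ψ
      obtain ⟨h0, h1⟩ := hc01 (ψ 0)
      exact ⟨pow_nonneg (by linarith) k, pow_le_one₀ (by linarith) (by linarith)⟩
    have hg_bd : ∃ C, ∀ ψ, |g ψ| ≤ C :=
      ⟨1, fun ψ => abs_le.2 ⟨by linarith [(hg01 ψ).1], (hg01 ψ).2⟩⟩
    have hlim := hweak g hg_cont hg_bd
    refine le_of_tendsto_of_tendsto' hdens hlim ?_
    intro n
    obtain ⟨a, r, hr, hSn⟩ := hS n
    have hgv : (fun v => g (T v φ)) = fun v => (1 - c (φ v)) ^ k := by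
      funext v; simp [hg, hT, zero_add]
    have hcont : Continuous fun v : Fin m → ℝ => (1 - c (φ v)) ^ k :=
      (continuous_const.sub (hc_cont.comp φ.continuous)).pow k
    have hmeasS : MeasurableSet (S n) := by rw [hSn]; exact measurableSet_Icc
    have hint : IntegrableOn (fun v => (1 - c (φ v)) ^ k) (S n) volume := by
      rw [hSn]; exact hcont.integrableOn_Icc
    have hintE : IntegrableOn (fun v => (1 - c (φ v)) ^ k) (S n ∩ E) volume :=
      hint.mono_set Set.inter_subset_left
    have hvol : volume (S n) = ENNReal.ofReal r ^ m := by
      rw [hSn, Real.volume_Icc_pi]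
      simp [add_sub_cancel_left]
    have hvolfin : volume (S n) < ⊤ := by
      rw [hvol]; exact ENNReal.pow_lt_top ENNReal.ofReal_lt_top
    have hvolpos : 0 < (volume (S n)).toReal := by
      rw [hvol, ENNReal.toReal_pow, ENNReal.toReal_ofReal hr.le]
      exact pow_pos hr m
    have h1 : (volume (S n ∩ E)).toReal ≤ ∫ v in S n, (1 - c (φ v)) ^ k := by
      have e1 : (volume (S n ∩ E)).toReal = ∫ _ in S n ∩ E, (1 : ℝ) := by
        rw [setIntegral_const, smul_eq_mul, mul_one]; rfl
      rw [e1]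
      refine le_trans (setIntegral_mono_on ?_ hintE (hmeasS.inter hE) ?_) ?_
      · refine integrableOn_const (ne_of_lt ?_)
        exact lt_of_le_of_lt (measure_mono Set.inter_subset_left) hvolfin
      · intro v hv
        have hφv : φ v = 0 := by
          rw [hφ v, Metric.infDist_zero_of_mem hv.2, min_eq_right zero_le_one]
        simp [hφv, hc]
      · refine setIntegral_mono_set hint ?_ (HasSubset.Subset.eventuallyLE Set.inter_subset_left)
        filter_upwards with v
        exact pow_nonneg (by linarith [(hc01 (φ v)).2]) k
    rw [hgv, div_eq_inv_mul]
    exact mul_le_mul_of_nonneg_left h1 (inv_nonneg.2 hvolpos.le)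
  -- a.e. the value at 0 lies in [0,1]
  have hae : ∀ᵐ ψ ∂μ, ψ ∈ closure (Set.range fun v => T v φ) := by
    rw [MeasureTheory.ae_iff]
    exact hsupp
  have haeI : ∀ᵐ ψ ∂μ, ψ 0 ∈ Set.Icc (0 : ℝ) 1 := by
    filter_upwards [hae] with ψ hψ
    have hsub : closure (Set.range fun v => T v φ) ⊆
        (fun ψ : C(Fin m → ℝ, ℝ) => ψ 0) ⁻¹' Set.Icc (0 : ℝ) 1 := by
      refine closure_minimal ?_ (IsClosed.preimage heval isClosed_Icc)
      rintro _ ⟨v, rfl⟩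
      have h0 := hT v φ 0
      simp only [Set.mem_preimage, h0, zero_add]
      exact ⟨(hφ01 v).1, (hφ01 v).2⟩
    exact hsub hψ
  have hcψ : ∀ᵐ ψ ∂μ, c (ψ 0) = ψ 0 := by
    filter_upwards [haeI] with ψ hψ
    simp [hc, max_eq_right hψ.1, min_eq_right hψ.2]
  have hcongr : ∀ k : ℕ, ∫ ψ, (1 - c (ψ 0)) ^ k ∂μ = ∫ ψ, (1 - ψ 0) ^ k ∂μ := by
    intro k
    refine integral_congr_ae ?_
    filter_upwards [hcψ] with ψ hψ
    rw [hψ]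
  constructor
  · rw [← hcongr l]; exact key l
  · set A : Set C(Fin m → ℝ, ℝ) := {ψ | ψ 0 = 0} with hA
    have hAmeas : MeasurableSet A := heval.measurable (measurableSet_singleton 0)
    have htend : Tendsto (fun k : ℕ => ∫ ψ, (1 - c (ψ 0)) ^ k ∂μ) atTop
        (nhds ((μ A).toReal)) := by
      have hgoal := tendsto_integral_of_dominated_convergence (μ := μ)
        (F := fun k ψ => (1 - c (ψ 0)) ^ k) (f := A.indicator 1) (fun _ => (1 : ℝ))
        (fun k => ((continuous_const.sub (hc_cont.comp heval)).pow k).aestronglyMeasurable)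
        (integrable_const 1)
        ?_ ?_
      · rwa [integral_indicator_one hAmeas] at hgoal
      · intro k
        filter_upwards with ψ
        obtain ⟨h0, h1⟩ := hc01 (ψ 0)
        rw [Real.norm_eq_abs, abs_le]
        constructor
        · linarith [pow_nonneg (by linarith : (0:ℝ) ≤ 1 - c (ψ 0)) k]
        · exact pow_le_one₀ (by linarith) (by linarith)
      · filter_upwards [haeI, hcψ] with ψ hψ hcp
        by_cases h : ψ 0 = 0
        · have hm : ψ ∈ A := h
          rw [Set.indicator_of_mem hm, Pi.one_apply]
          have he : (fun k : ℕ => (1 - c (ψ 0)) ^ k) = fun _ => 1 := by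
            funext k; rw [hcp, h]; simp
          rw [he]; exact tendsto_const_nhds
        · have hmem : ψ ∉ A := h
          rw [Set.indicator_of_notMem hmem]
          have h0 : 0 < ψ 0 := lt_of_le_of_ne hψ.1 (Ne.symm h)
          have : Tendsto (fun k : ℕ => (1 - ψ 0) ^ k) atTop (nhds 0) := by
            apply tendsto_pow_atTop_nhds_zero_of_abs_lt_one
            rw [abs_lt]
            constructor <;> [linarith [hψ.2]; linarith]
          simpa [hcp] using this
    have hD' : D ≤ (μ A).toReal := ge_of_tendsto' htend key
    exact ENNReal.ofReal_le_of_le_toReal hD'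
end

section
/- Let E ⊆ ℝ^m, φ(u) = min(1, dist(u,E)), X⁰ the orbit closure of φ with the translation action T_v, μ a translation-limit measure as above, and Ẽ = {ψ ∈ X⁰ : ψ(0) = 0}. If u₁,…,u_l ∈ ℝ^m satisfy μ(Ẽ ∩ T_{u₁}^{-1}Ẽ ∩ ⋯ ∩ T_{u_l}^{-1}Ẽ) > 0, then for every δ > 0 the set E_δ ∩ (E_δ − u₁) ∩ ⋯ ∩ (E_δ − u_l) is nonempty, where E_δ denotes the set of points at distance less than δ from E. -/
open MeasureTheory Filter

/-- Furstenberg–Katznelson–Weiss correspondence, second half: with `φ(u) = min(1, dist(u,E))`,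
`X⁰` the orbit closure of `φ` under translations `T_v`, `μ` a translation-limit (weak*) measure
and `Ẽ = {ψ : ψ(0) = 0}`, if `μ(Ẽ ∩ T_{u₁}⁻¹Ẽ ∩ ⋯ ∩ T_{u_l}⁻¹Ẽ) > 0` then for every `δ > 0`
the set `E_δ ∩ (E_δ − u₁) ∩ ⋯ ∩ (E_δ − u_l)` is nonempty. -/
theorem stmt1 (m l : ℕ) (E : Set (Fin m → ℝ))
    (φ : C(Fin m → ℝ, ℝ)) (hφ : ∀ u, φ u = min 1 (Metric.infDist u E))
    (T : (Fin m → ℝ) → C(Fin m → ℝ, ℝ) → C(Fin m → ℝ, ℝ))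
    (hT : ∀ v ψ u, T v ψ u = ψ (u + v))
    (S : ℕ → Set (Fin m → ℝ))
    (hS : ∀ n, ∃ a r, 0 < r ∧ S n = Set.Icc a (a + fun _ => r))
    (μ : Measure C(Fin m → ℝ, ℝ)) [IsProbabilityMeasure μ]
    (hsupp : μ (closure (Set.range fun v => T v φ))ᶜ = 0)
    (hweak : ∀ f : C(Fin m → ℝ, ℝ) → ℝ, Continuous f → (∃ C, ∀ ψ, |f ψ| ≤ C) →
      Tendsto (fun n => (volume (S n)).toReal⁻¹ * ∫ v in S n, f (T v φ))
        atTop (nhds (∫ ψ, f ψ ∂μ)))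
    (u : Fin l → (Fin m → ℝ))
    (hpos : 0 < μ ({ψ : C(Fin m → ℝ, ℝ) | ψ 0 = 0} ∩
      ⋂ i, T (u i) ⁻¹' {ψ : C(Fin m → ℝ, ℝ) | ψ 0 = 0}))
    (δ : ℝ) (hδ : 0 < δ) :
    ∃ w : Fin m → ℝ, Metric.infDist w E < δ ∧ ∀ i, Metric.infDist (w + u i) E < δ := by
  haveI : BorelSpace C(Fin m → ℝ, ℝ) := ⟨rfl⟩
  by_contra hcon
  push_neg at hcon
  set δ' : ℝ := min δ 1 with hδ'def
  have hδ' : 0 < δ' := lt_min hδ one_pos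
  set g : ℝ → ℝ := fun x => min δ' (max (δ' - x) 0) with hgdef
  have hg0 : ∀ x, 0 ≤ g x := fun x => le_min hδ'.le (le_max_right _ _)
  have hgle : ∀ x, g x ≤ δ' := fun x => min_le_left _ _
  have hgz : ∀ x, δ' ≤ x → g x = 0 := by
    intro x hx
    simp only [hgdef]
    rw [max_eq_right (sub_nonpos.mpr hx), min_eq_right hδ'.le]
  have hgc : Continuous g :=
    continuous_const.min ((continuous_const.sub continuous_id).max continuous_const)
  have hφge : ∀ w, δ ≤ Metric.infDist w E → δ' ≤ φ w := by
    intro w hw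
    rw [hφ]
    exact le_min (min_le_right δ 1) ((min_le_left δ 1).trans hw)
  have hφlt : ∀ w, φ w < δ' → Metric.infDist w E < δ := by
    intro w hw
    by_contra h
    exact absurd (hφge w (not_lt.mp h)) (not_le.mpr hw)
  set f : C(Fin m → ℝ, ℝ) → ℝ := fun ψ => g (ψ 0) * ∏ i : Fin l, g (ψ (u i)) with hfdef
  have hfc : Continuous f := by
    apply Continuous.mul
    · exact hgc.comp (continuous_eval_const 0)
    · exact continuous_finset_prod _ fun i _ =>
        hgc.comp (continuous_eval_const (u i))
  have hf0 : ∀ ψ, 0 ≤ f ψ := fun ψ =>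
    mul_nonneg (hg0 _) (Finset.prod_nonneg fun i _ => hg0 _)
  have hfle : ∀ ψ, f ψ ≤ δ' * δ' ^ l := by
    intro ψ
    have h2 : ∏ i : Fin l, g (ψ (u i)) ≤ ∏ _i : Fin l, δ' :=
      Finset.prod_le_prod (fun i _ => hg0 _) (fun i _ => hgle _)
    calc f ψ ≤ δ' * ∏ i : Fin l, g (ψ (u i)) :=
          mul_le_mul_of_nonneg_right (hgle _) (Finset.prod_nonneg fun i _ => hg0 _)
      _ ≤ δ' * ∏ _i : Fin l, δ' := mul_le_mul_of_nonneg_left h2 hδ'.le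
      _ = δ' * δ' ^ l := by simp
  -- the set
  set A : Set C(Fin m → ℝ, ℝ) := {ψ : C(Fin m → ℝ, ℝ) | ψ 0 = 0} ∩
      ⋂ i, T (u i) ⁻¹' {ψ : C(Fin m → ℝ, ℝ) | ψ 0 = 0} with hAdef
  have hAeq : A = {ψ : C(Fin m → ℝ, ℝ) | ψ 0 = 0} ∩
      ⋂ i, {ψ : C(Fin m → ℝ, ℝ) | ψ (0 + u i) = 0} := by
    simp only [hAdef, Set.preimage_setOf_eq, hT]
  have hAmeas : MeasurableSet A := by
    rw [hAeq]
    refine MeasurableSet.inter ?_ (MeasurableSet.iInter fun i => ?_)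
    · exact (isClosed_singleton.preimage (continuous_eval_const 0)).measurableSet
    · exact (isClosed_singleton.preimage
        (continuous_eval_const (0 + u i))).measurableSet
  have hfA : ∀ ψ ∈ A, δ' * δ' ^ l ≤ f ψ := by
    intro ψ hψ
    rw [hAeq] at hψ
    obtain ⟨h1, h2⟩ := hψ
    have h1' : ψ 0 = 0 := h1
    have h2' : ∀ i, ψ (u i) = 0 := by
      intro i
      have := Set.mem_iInter.mp h2 i
      simpa using this
    have hg0' : g 0 = δ' := by
      simp only [hgdef, sub_zero]
      rw [max_eq_left hδ'.le, min_self]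
    have : f ψ = δ' * δ' ^ l := by
      simp only [hfdef, h1', h2', hg0', Finset.prod_const, Finset.card_univ,
        Fintype.card_fin]
    rw [this]
  -- integrability
  have hint : Integrable f μ := by
    have h := (BoundedContinuousFunction.ofNormedAddCommGroup f hfc (δ' * δ' ^ l)
      (fun ψ => by rw [Real.norm_eq_abs, abs_of_nonneg (hf0 ψ)]; exact hfle ψ)).integrable μ
    rwa [BoundedContinuousFunction.coe_ofNormedAddCommGroup] at h
  -- positivity of the integral
  have hμA : 0 < (μ A).toReal :=
    ENNReal.toReal_pos hpos.ne' (measure_ne_top μ A)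
  have hintpos : 0 < ∫ ψ, f ψ ∂μ := by
    have h1 : (δ' * δ' ^ l) * (μ A).toReal ≤ ∫ ψ in A, f ψ ∂μ :=
      setIntegral_ge_of_const_le_real hAmeas (measure_ne_top μ A) hfA hint.integrableOn
    have h2 : ∫ ψ in A, f ψ ∂μ ≤ ∫ ψ, f ψ ∂μ :=
      setIntegral_le_integral hint (Filter.Eventually.of_forall hf0)
    have h3 : 0 < (δ' * δ' ^ l) * (μ A).toReal :=
      mul_pos (mul_pos hδ' (pow_pos hδ' l)) hμA
    linarith
  -- the averages are all zero
  have hzero : ∀ v, f (T v φ) = 0 := by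
    intro v
    by_cases hv : Metric.infDist v E < δ
    · obtain ⟨i, hi⟩ := hcon v hv
      have : δ' ≤ (T v φ) (u i) := by
        rw [hT]
        exact hφge _ (by rwa [add_comm])
      simp only [hfdef]
      rw [Finset.prod_eq_zero (Finset.mem_univ i) (hgz _ this), mul_zero]
    · have : δ' ≤ (T v φ) 0 := by
        rw [hT, zero_add]
        exact hφge _ (not_lt.mp hv)
      simp only [hfdef]
      rw [hgz _ this, zero_mul]
  have hconst : (fun n => (volume (S n)).toReal⁻¹ * ∫ v in S n, f (T v φ)) =
      fun _ => (0 : ℝ) := by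
    funext n
    have : (fun v => f (T v φ)) = fun _ => (0 : ℝ) := funext hzero
    rw [this, integral_zero, mul_zero]
  have htend := hweak f hfc ⟨δ' * δ' ^ l, fun ψ => by
    rw [abs_of_nonneg (hf0 ψ)]; exact hfle ψ⟩
  rw [hconst] at htend
  have : (0 : ℝ) = ∫ ψ, f ψ ∂μ := tendsto_nhds_unique tendsto_const_nhds htend
  linarith
end

section
/- Let m ≥ 1 and, for each r ∈ ℕ, let s₁^r, …, s_m^r ∈ ℝ^m with not all s_l^r equal to zero. Let u₁, …, u_k ∈ ℝ^m be nonzero with u_i ≠ u_j for i ≠ j and suppose m ≥ 3. Then there exists an antisymmetric matrix B ∈ M_m(ℝ) such that Bu_i ≠ 0 and B(u_i − u_j) ≠ 0 for all 1 ≤ i, j ≤ k with i ≠ j, and for every r the linear functional f_{r,B}(M) = Σ_{l=1}^m ⟨s_l^r, M B e_l⟩ on M_m(ℝ) is not identically zero, where e₁,…,e_m is the standard basis of ℝ^m. -/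
open MeasureTheory Matrix

/-- A finite-dimensional real vector space is not a countable union of proper subspaces. -/
theorem stmt3_avoid {E : Type*} [NormedAddCommGroup E] [NormedSpace ℝ E] [MeasurableSpace E]
    [BorelSpace E] [FiniteDimensional ℝ E] (μ : Measure E) [μ.IsAddHaarMeasure]
    {ι : Type*} [Countable ι]
    (S : ι → Submodule ℝ E) (hS : ∀ n, S n ≠ ⊤) : ∃ x, ∀ n, x ∉ S n := by
  by_contra h
  push_neg at h
  have hcover : (Set.univ : Set E) ⊆ ⋃ n, (S n : Set E) := fun x _ =>
    Set.mem_iUnion.2 (h x)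
  have h0 : μ (⋃ n, (S n : Set E)) = 0 :=
    measure_iUnion_null fun n => Measure.addHaar_submodule μ (S n) (hS n)
  exact (isOpen_univ.measure_ne_zero μ Set.univ_nonempty) (measure_mono_null hcover h0)

/-- For every nonzero vector there is a matrix whose antisymmetrization does not kill it. -/
theorem stmt3_exC {m : ℕ} (hm : 2 ≤ m) (v : Fin m → ℝ) (hv : v ≠ 0) :
    ∃ C : Fin m → Fin m → ℝ, (Matrix.of C - (Matrix.of C)ᵀ).mulVec v ≠ 0 := by
  obtain ⟨i, hi⟩ := Function.ne_iff.1 hv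
  have : Nontrivial (Fin m) := Fin.nontrivial_iff_two_le.2 hm
  obtain ⟨j, hj⟩ := exists_ne i
  refine ⟨Matrix.single j i 1, fun h => hi ?_⟩
  have h2 := congrFun h j
  have key : (Matrix.of (Matrix.single j i (1:ℝ)) -
      (Matrix.of (Matrix.single j i (1:ℝ)))ᵀ).mulVec v j = v i := by
    rw [show Matrix.of (Matrix.single j i (1:ℝ)) = Matrix.single j i 1 from rfl]
    simp [Matrix.sub_mulVec, Matrix.mulVec, dotProduct, Matrix.single,
      Matrix.transpose_apply, Finset.sum_ite_eq, Finset.sum_ite_eq', hj, hj.symm,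
      Matrix.of_apply, sub_eq_zero]
  rw [key] at h2; simpa using h2

/-- For countably many tuples `(s₁^r,…,s_m^r)`, each not identically zero, and distinct nonzero
vectors `u₁,…,u_k ∈ ℝ^m` (`m ≥ 3`), there is an antisymmetric matrix `B` with `Bu_i ≠ 0`,
`B(u_i − u_j) ≠ 0` for `i ≠ j`, and such that for every `r` the linear functional
`M ↦ Σ_l ⟨s_l^r, M B e_l⟩` is not identically zero. -/
theorem stmt3 (m k : ℕ) (hm : 3 ≤ m)
    (s : ℕ → Fin m → (Fin m → ℝ)) (hs : ∀ r, ∃ l, s r l ≠ 0)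
    (u : Fin k → (Fin m → ℝ)) (hu : ∀ i, u i ≠ 0)
    (huij : ∀ i j, i ≠ j → u i ≠ u j) :
    ∃ B : Matrix (Fin m) (Fin m) ℝ, B.transpose = -B ∧
      (∀ i, B.mulVec (u i) ≠ 0) ∧
      (∀ i j, i ≠ j → B.mulVec (u i - u j) ≠ 0) ∧
      (∀ r, ∃ M : Matrix (Fin m) (Fin m) ℝ,
        ∑ l, dotProduct (s r l) ((M * B).mulVec (Pi.single l 1)) ≠ 0) := by
  classical
  have key : ∀ r, ∃ a : Fin m, (fun l => s r l a) ≠ (0 : Fin m → ℝ) := by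
    intro r
    obtain ⟨l, hl⟩ := hs r
    obtain ⟨a, ha⟩ := Function.ne_iff.1 hl
    exact ⟨a, fun h => ha (by simpa using congrFun h l)⟩
  choose a ha using key
  let v : (Fin k ⊕ (Fin k × Fin k) ⊕ ℕ) → (Fin m → ℝ) := fun n =>
    match n with
    | Sum.inl i => u i
    | Sum.inr (Sum.inl p) =>
        if u p.1 = u p.2 then Pi.single (⟨0, by omega⟩ : Fin m) 1 else u p.1 - u p.2
    | Sum.inr (Sum.inr r) => fun l => s r l (a r)
  have hv : ∀ n, v n ≠ 0 := by
    rintro (i | p | r)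
    · exact hu i
    · by_cases h : u p.1 = u p.2
      · simp only [v, if_pos h]
        intro h0
        have := congrFun h0 ⟨0, by omega⟩
        simp at this
      · simp only [v, if_neg h]
        exact sub_ne_zero.2 h
    · exact ha r
  let L : (Fin m → ℝ) → ((Fin m → Fin m → ℝ) →ₗ[ℝ] (Fin m → ℝ)) := fun w =>
    { toFun := fun C => (Matrix.of C - (Matrix.of C)ᵀ).mulVec w
      map_add' := fun C D => by
        have h1 : Matrix.of (C + D) - (Matrix.of (C + D))ᵀ
            = (Matrix.of C - (Matrix.of C)ᵀ) + (Matrix.of D - (Matrix.of D)ᵀ) := by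
          ext x y; simp [Matrix.transpose_apply]; ring
        simp only [h1, Matrix.add_mulVec]
      map_smul' := fun c C => by
        have h1 : Matrix.of (c • C) - (Matrix.of (c • C))ᵀ
            = c • (Matrix.of C - (Matrix.of C)ᵀ) := by
          ext x y; simp [Matrix.transpose_apply]; ring
        simp only [h1, Matrix.smul_mulVec, RingHom.id_apply] }
  have hS : ∀ n, LinearMap.ker (L (v n)) ≠ ⊤ := by
    intro n htop
    obtain ⟨C0, hC0⟩ := stmt3_exC (by omega) (v n) (hv n)
    exact hC0 (LinearMap.mem_ker.1 (htop ▸ Submodule.mem_top (x := C0)))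
  obtain ⟨C, hC⟩ := stmt3_avoid (volume : Measure (Fin m → Fin m → ℝ))
    (fun n => LinearMap.ker (L (v n))) hS
  set B : Matrix (Fin m) (Fin m) ℝ := Matrix.of C - (Matrix.of C)ᵀ with hBdef
  have hB : ∀ n, B.mulVec (v n) ≠ 0 := fun n h0 => hC n (LinearMap.mem_ker.2 h0)
  refine ⟨B, ?_, ?_, ?_, ?_⟩
  · ext x y; simp [hBdef, Matrix.transpose_apply]
  · exact fun i => hB (Sum.inl i)
  · intro i j hij
    have := hB (Sum.inr (Sum.inl (i, j)))
    simpa [v, if_neg (huij i j hij)] using this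
  · intro r
    have hw := hB (Sum.inr (Sum.inr r))
    obtain ⟨b, hb⟩ := Function.ne_iff.1 hw
    refine ⟨Matrix.single (a r) b 1, ?_⟩
    have hsum : ∑ l, dotProduct (s r l)
        (((Matrix.single (a r) b 1) * B).mulVec (Pi.single l 1))
        = (B.mulVec (fun l => s r l (a r))) b := by
      simp only [Matrix.mulVec_single, mul_one, dotProduct, Matrix.mul_apply,
        Matrix.single, Matrix.of_apply, ite_and, Matrix.mulVec]
      simp [Pi.single_apply, ite_mul, mul_ite, Finset.sum_ite_eq, Finset.mul_sum, mul_comm]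
    rw [hsum]
    simpa using hb
end

section
/- Let m ≥ 3, let S ⊆ M_m(ℝ) be a countably linear set, and let u₁, …, u_k ∈ ℝ^m be distinct nonzero vectors. Assume (X, B, μ, ℝ^m) is an ergodic measure-preserving ℝ^m-action for which, off a countable family of hyperplanes through the origin in ℝ^m, each one-parameter subgroup acts ergodically. Then there exist M ∈ M_m(ℝ) \ S and P ∈ SO(m) such that MᵗP is antisymmetric and the transformations T_{Mu_i} and T_{M(u_i − u_j)} (i ≠ j) are all ergodic. -/
open MeasureTheory

section Stmt6Aux
open Matrix MvPolynomial

theorem stmt6aux_meas {n : Type*} [Fintype n] (p : MvPolynomial n ℝ) :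
    MeasurableSet {x : n → ℝ | eval x p = 0} :=
  (isClosed_eq (p.continuous_eval) continuous_const).measurableSet

theorem stmt6aux_null_fin : ∀ (n : ℕ) (p : MvPolynomial (Fin n) ℝ), p ≠ 0 →
    volume {x : Fin n → ℝ | eval x p = 0} = 0 := by
  intro n
  induction n with
  | zero =>
    intro p hp
    obtain ⟨r, rfl⟩ := MvPolynomial.C_surjective (Fin 0) p
    have hr : r ≠ 0 := fun h => hp (by simp [h])
    have : {x : Fin 0 → ℝ | eval x (C r) = 0} = (∅ : Set (Fin 0 → ℝ)) := by
      ext x; simp [hr]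
    rw [this, measure_empty]
  | succ n ih =>
    intro p hp
    set q : Polynomial (MvPolynomial (Fin n) ℝ) := finSuccEquiv ℝ n p with hqdef
    have hq : q ≠ 0 := by
      intro h
      apply hp
      have := (finSuccEquiv ℝ n).injective (a₁ := p) (a₂ := 0) (by simpa [hqdef] using h)
      simpa using this
    obtain ⟨j, hj⟩ : ∃ j, q.coeff j ≠ 0 := by
      by_contra h
      push_neg at h
      exact hq (Polynomial.ext fun k => by simpa using h k)
    have hN : volume {y : Fin n → ℝ | eval y (q.coeff j) = 0} = 0 := ih _ hj
    -- the swapped set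
    set W : Set ((Fin n → ℝ) × ℝ) := {yz | eval (Fin.cons yz.2 yz.1) p = 0} with hWdef
    have hconsc : Continuous fun yz : (Fin n → ℝ) × ℝ => (Fin.cons yz.2 yz.1 : Fin (n+1) → ℝ) := by
      apply continuous_pi
      intro i
      induction i using Fin.cases with
      | zero => simpa using continuous_snd
      | succ j => simpa using (show Continuous fun a : (Fin n → ℝ) × ℝ => a.1 j from (continuous_apply j).comp continuous_fst)
    have hWm : MeasurableSet W :=
      (isClosed_eq ((MvPolynomial.continuous_eval (p := p)).comp hconsc) continuous_const).measurableSet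
    have hWnull : (volume : Measure (Fin n → ℝ)).prod (volume : Measure ℝ) W = 0 := by
      rw [MeasureTheory.Measure.measure_prod_null hWm]
      filter_upwards [MeasureTheory.measure_eq_zero_iff_ae_notMem.mp hN] with y hy
      have hqy : q.map (eval y) ≠ 0 := by
        intro h
        apply hy
        have : (q.map (eval y)).coeff j = 0 := by simp [h]
        rw [Polynomial.coeff_map] at this
        simpa using this
      have hsub : (Prod.mk y ⁻¹' W) ⊆ {t : ℝ | (q.map (eval y)).IsRoot t} := by
        intro t ht
        have : eval (Fin.cons t y) p = 0 := ht
        rwa [MvPolynomial.eval_eq_eval_mv_eval'] at this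
      exact measure_mono_null hsub ((Polynomial.finite_setOf_isRoot hqy).measure_zero _)
    -- transport along the measurable equiv
    have hmp : MeasurePreserving
        (fun x : Fin (n+1) → ℝ => ((Fin.tail x : Fin n → ℝ), x 0))
        volume ((volume : Measure (Fin n → ℝ)).prod (volume : Measure ℝ)) := by
      have h1 := MeasureTheory.volume_preserving_piFinSuccAbove (fun _ : Fin (n+1) => ℝ) 0
      have h2 := MeasureTheory.Measure.measurePreserving_swap
        (μ := (volume : Measure ℝ)) (ν := (volume : Measure (Fin n → ℝ)))
      have := h2.comp h1
      convert this using 1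
      · rfl
      · funext x; simp [MeasurableEquiv.piFinSuccAbove, Fin.removeNth]
    have hpre : (fun x : Fin (n+1) → ℝ => ((Fin.tail x : Fin n → ℝ), x 0)) ⁻¹' W
        = {x : Fin (n+1) → ℝ | eval x p = 0} := by
      ext x
      simp only [Set.mem_preimage, hWdef, Set.mem_setOf_eq, Fin.cons_self_tail]
    calc volume {x : Fin (n+1) → ℝ | eval x p = 0}
        = volume ((fun x : Fin (n+1) → ℝ => ((Fin.tail x : Fin n → ℝ), x 0)) ⁻¹' W) := by rw [hpre]
      _ = ((volume : Measure (Fin n → ℝ)).prod (volume : Measure ℝ)) W :=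
          hmp.measure_preimage hWm.nullMeasurableSet
      _ = 0 := hWnull


theorem stmt6aux_null {ι : Type*} [Fintype ι] (p : MvPolynomial ι ℝ) (hp : p ≠ 0) :
    volume {x : ι → ℝ | eval x p = 0} = 0 := by
  classical
  set n := Fintype.card ι
  set e : ι ≃ Fin n := Fintype.equivFin ι with he
  set q : MvPolynomial (Fin n) ℝ := rename e p with hq
  have hq0 : q ≠ 0 := fun h => hp (MvPolynomial.rename_injective e e.injective (by simpa [hq] using h))
  have hfin := stmt6aux_null_fin n q hq0
  set φ := MeasurableEquiv.piCongrLeft (fun _ : ι => ℝ) e.symm with hφ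
  have hmp : MeasurePreserving φ volume volume :=
    MeasureTheory.volume_measurePreserving_piCongrLeft (fun _ : ι => ℝ) e.symm
  have happ : ∀ (y : Fin n → ℝ) (a : ι), φ y a = y (e a) := by
    intro y a
    have := MeasurableEquiv.piCongrLeft_apply_apply (β := fun _ : ι => ℝ) e.symm y (e a)
    simpa using this
  have hpre : φ ⁻¹' {x : ι → ℝ | eval x p = 0} = {y : Fin n → ℝ | eval y q = 0} := by
    ext y
    have : φ y = fun a => y (e a) := funext (happ y)
    simp only [Set.mem_preimage, Set.mem_setOf_eq, this, hq, MvPolynomial.eval_rename]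
    rfl
  have hms : MeasurableSet {x : ι → ℝ | eval x p = 0} :=
    (isClosed_eq (MvPolynomial.continuous_eval (p := p)) continuous_const).measurableSet
  have := hmp.measure_preimage (s := {x : ι → ℝ | eval x p = 0}) hms.nullMeasurableSet
  rw [hpre] at this
  rw [← this, hfin]

variable {m : ℕ}

theorem stmt6aux_exists_third (hm : 3 ≤ m) (p l : Fin m) : ∃ q : Fin m, q ≠ p ∧ q ≠ l := by
  by_contra h
  push_neg at h
  have hsub : (Finset.univ : Finset (Fin m)) ⊆ {p, l} := by
    intro q _
    simp only [Finset.mem_insert, Finset.mem_singleton]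
    rcases eq_or_ne q p with h' | h'
    · exact Or.inl h'
    · exact Or.inr (h q h')
  have h1 := Finset.card_le_card hsub
  have h2 : ({p, l} : Finset (Fin m)).card ≤ 2 :=
    (Finset.card_insert_le _ _).trans (by simp)
  simp only [Finset.card_univ, Fintype.card_fin] at h1
  omega

theorem stmt6aux_three (hm : 3 ≤ m) :
    ∃ i j l : Fin m, i ≠ j ∧ j ≠ l ∧ i ≠ l := by
  refine ⟨⟨0, by omega⟩, ⟨1, by omega⟩, ⟨2, by omega⟩, ?_, ?_, ?_⟩ <;>
    simp [Fin.ext_iff]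

variable {m : ℕ}

/-- rank-2 antisymmetric matrix -/
theorem stmt6aux_vmv_mulVec (x y v : Fin m → ℝ) :
    (vecMulVec x y).mulVec v = (y ⬝ᵥ v) • x := by
  ext i
  simp only [vecMulVec_apply, mulVec, dotProduct, Pi.smul_apply, smul_eq_mul]
  rw [Finset.sum_mul]
  apply Finset.sum_congr rfl
  intro j _
  ring

theorem stmt6aux_vmv_transpose (x y : Fin m → ℝ) :
    (vecMulVec x y)ᵀ = vecMulVec y x := by
  ext i j; simp [vecMulVec_apply, mul_comm]

theorem stmt6aux_Kxy_anti (x y : Fin m → ℝ) :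
    (vecMulVec x y - vecMulVec y x)ᵀ = -(vecMulVec x y - vecMulVec y x) := by
  rw [transpose_sub, stmt6aux_vmv_transpose, stmt6aux_vmv_transpose]
  abel

theorem stmt6aux_Kxy_mulVec (x y v : Fin m → ℝ) :
    (vecMulVec x y - vecMulVec y x).mulVec v = (y ⬝ᵥ v) • x - (x ⬝ᵥ v) • y := by
  rw [sub_mulVec, stmt6aux_vmv_mulVec, stmt6aux_vmv_mulVec]

/-- 1 + K invertible for antisymmetric K -/
theorem stmt6aux_det_unit {K : Matrix (Fin m) (Fin m) ℝ} (hK : Kᵀ = -K) :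
    IsUnit (1 + K).det := by
  rw [isUnit_iff_ne_zero]
  intro hdet
  obtain ⟨v, hv, hmv⟩ := (Matrix.exists_mulVec_eq_zero_iff).mpr hdet
  have h1 : v ⬝ᵥ (1 + K).mulVec v = 0 := by rw [hmv, dotProduct_zero]
  rw [add_mulVec, one_mulVec, dotProduct_add] at h1
  have h2 : v ⬝ᵥ K.mulVec v = 0 := by
    have ha : v ⬝ᵥ K.mulVec v = vecMul v K ⬝ᵥ v := dotProduct_mulVec v K v
    have hb : vecMul v K = -(K.mulVec v) := by
      have : vecMul v (Kᵀᵀ) = Kᵀ.mulVec v := vecMul_transpose Kᵀ v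
      rw [transpose_transpose] at this
      rw [this, hK, neg_mulVec]
    rw [hb, neg_dotProduct, dotProduct_comm] at ha
    have := dotProduct_comm v (K *ᵥ v)
    linarith
  rw [h2, add_zero] at h1
  exact hv (dotProduct_self_eq_zero.mp h1)

theorem stmt6aux_det_unit' {K : Matrix (Fin m) (Fin m) ℝ} (hK : Kᵀ = -K) :
    IsUnit (1 - K).det := by
  have h : (1 : Matrix (Fin m) (Fin m) ℝ) - K = 1 + (-K) := by abel
  rw [h]
  exact stmt6aux_det_unit (by rw [transpose_neg, hK, neg_neg])

/-- entries of (K*S+S*K) for rank-2 antisymmetric K -/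
theorem stmt6aux_entry (S : Matrix (Fin m) (Fin m) ℝ) (x y : Fin m → ℝ) (p q : Fin m)
    (h : (vecMulVec x y - vecMulVec y x) * S + S * (vecMulVec x y - vecMulVec y x) = 0) :
    (y ⬝ᵥ S.mulVec (Pi.single q 1)) * x p - (x ⬝ᵥ S.mulVec (Pi.single q 1)) * y p
      + y q * (S.mulVec x) p - x q * (S.mulVec y) p = 0 := by
  set K := vecMulVec x y - vecMulVec y x with hK
  have h0 : (K * S + S * K).mulVec (Pi.single q 1) = 0 := by rw [h, zero_mulVec]
  have h1 : (K * S + S * K).mulVec (Pi.single q 1)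
      = K.mulVec (S.mulVec (Pi.single q 1)) + S.mulVec (K.mulVec (Pi.single q 1)) := by
    rw [add_mulVec, mulVec_mulVec, mulVec_mulVec]
  have h2 : K.mulVec (Pi.single q 1) = y q • x - x q • y := by
    rw [hK, stmt6aux_Kxy_mulVec, dotProduct_single, dotProduct_single, mul_one, mul_one]
  have h3 : K.mulVec (S.mulVec (Pi.single q 1))
      = (y ⬝ᵥ S.mulVec (Pi.single q 1)) • x - (x ⬝ᵥ S.mulVec (Pi.single q 1)) • y := by
    rw [hK, stmt6aux_Kxy_mulVec]
  have h4 : S.mulVec (y q • x - x q • y) = y q • S.mulVec x - x q • S.mulVec y := by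
    rw [mulVec_sub, mulVec_smul, mulVec_smul]
  have := congrFun (h1 ▸ h0 : K.mulVec (S.mulVec (Pi.single q 1))
      + S.mulVec (K.mulVec (Pi.single q 1)) = 0) p
  rw [h2, h3, h4] at this
  simp only [Pi.add_apply, Pi.sub_apply, Pi.smul_apply, smul_eq_mul, Pi.zero_apply] at this
  linarith

theorem stmt6aux_C (hm : 3 ≤ m) (S : Matrix (Fin m) (Fin m) ℝ)
    (h : ∀ K : Matrix (Fin m) (Fin m) ℝ, Kᵀ = -K → K * S + S * K = 0) : S = 0 := by
  have colapp : ∀ (i p : Fin m), (S.mulVec (Pi.single i 1)) p = S p i := by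
    intro i p
    simp [mulVec, dotProduct_single]
  have key : ∀ i j p q : Fin m,
      S j q * Pi.single (M := fun _ => ℝ) i 1 p - S i q * Pi.single (M := fun _ => ℝ) j 1 p
        + Pi.single (M := fun _ => ℝ) j 1 q * S p i - Pi.single (M := fun _ => ℝ) i 1 q * S p j = 0 := by
    intro i j p q
    have hK := stmt6aux_Kxy_anti (Pi.single (M := fun _ => ℝ) i 1) (Pi.single (M := fun _ => ℝ) j 1)
    have hthis := stmt6aux_entry S (Pi.single i 1) (Pi.single j 1) p q (h _ hK)
    simp only [single_dotProduct, one_mul, colapp] at hthis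
    exact hthis
  have offdiag : ∀ p w : Fin m, w ≠ p → S p w = 0 := by
    intro p w hwp
    obtain ⟨q, hqp, hqw⟩ := stmt6aux_exists_third hm p w
    have hthis := key q w p q
    simp [Pi.single_apply, Ne.symm hqp, Ne.symm hwp, hqw] at hthis
    linarith
  have diagrel : ∀ i j : Fin m, i ≠ j → S j j + S i i = 0 := by
    intro i j hij
    have hthis := key i j i j
    simp [Pi.single_apply, hij, Ne.symm hij] at hthis
    linarith
  have diag : ∀ p : Fin m, S p p = 0 := by
    intro p
    obtain ⟨q, hqp, _⟩ := stmt6aux_exists_third hm p p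
    obtain ⟨r, hrp, hrq⟩ := stmt6aux_exists_third hm p q
    have h1 := diagrel p q (fun h' => hqp h'.symm)
    have h2 := diagrel p r (fun h' => hrp h'.symm)
    have h3 := diagrel q r (fun h' => hrq h'.symm)
    linarith
  ext p q
  rcases eq_or_ne p q with rfl | hpq
  · simpa using diag p
  · simpa using offdiag p q (Ne.symm hpq)

theorem stmt6aux_trace_vmv (R : Matrix (Fin m) (Fin m) ℝ) (x y : Fin m → ℝ) :
    (R * vecMulVec x y).trace = y ⬝ᵥ R.mulVec x := by
  simp only [Matrix.trace, Matrix.diag, mul_apply, vecMulVec_apply, mulVec, dotProduct,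
    Finset.mul_sum]
  refine Finset.sum_congr rfl fun p _ => Finset.sum_congr rfl fun r _ => by ring

theorem stmt6aux_A (R : Matrix (Fin m) (Fin m) ℝ)
    (h : ∀ A : Matrix (Fin m) (Fin m) ℝ, Aᵀ = -A → (R * A).trace = 0) : Rᵀ = R := by
  have key : ∀ i j : Fin m, R j i = R i j := by
    intro i j
    have h1 := h _ (stmt6aux_Kxy_anti (Pi.single (M := fun _ => ℝ) i 1)
      (Pi.single (M := fun _ => ℝ) j 1))
    rw [mul_sub, Matrix.trace_sub, stmt6aux_trace_vmv, stmt6aux_trace_vmv] at h1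
    have e1 : (Pi.single (M := fun _ => ℝ) j 1) ⬝ᵥ R.mulVec (Pi.single i 1) = R j i := by
      simp [single_dotProduct, mulVec, dotProduct_single]
    have e2 : (Pi.single (M := fun _ => ℝ) i 1) ⬝ᵥ R.mulVec (Pi.single j 1) = R i j := by
      simp [single_dotProduct, mulVec, dotProduct_single]
    rw [e1, e2] at h1
    linarith
  ext i j
  simp [transpose_apply, key]

theorem stmt6aux_B (hm : 3 ≤ m) (S : Matrix (Fin m) (Fin m) ℝ) (hS : S ≠ 0) :
    ∃ K A : Matrix (Fin m) (Fin m) ℝ, Kᵀ = -K ∧ Aᵀ = -A ∧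
      (Sᵀ * ((1 - K) * A * (1 - K))).trace ≠ 0 := by
  by_contra hcon
  push_neg at hcon
  -- rearrange the trace
  have hre : ∀ K A : Matrix (Fin m) (Fin m) ℝ,
      (Sᵀ * ((1 - K) * A * (1 - K))).trace = (((1 - K) * Sᵀ * (1 - K)) * A).trace := by
    intro K A
    have e1 : Sᵀ * ((1 - K) * A * (1 - K)) = (Sᵀ * (1 - K) * A) * (1 - K) := by
      noncomm_ring
    rw [e1, Matrix.trace_mul_comm]
    congr 1
    noncomm_ring
  have hsym : ∀ K : Matrix (Fin m) (Fin m) ℝ, Kᵀ = -K →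
      (1 + K) * S * (1 + K) = (1 - K) * Sᵀ * (1 - K) := by
    intro K hK
    have := stmt6aux_A ((1 - K) * Sᵀ * (1 - K)) (fun A hA => by
      rw [← hre K A]; exact hcon K A hK hA)
    calc (1 + K) * S * (1 + K) = ((1 - K) * Sᵀ * (1 - K))ᵀ := by
          rw [transpose_mul, transpose_mul, transpose_sub, transpose_one, hK,
            transpose_transpose, sub_neg_eq_add]
          noncomm_ring
      _ = (1 - K) * Sᵀ * (1 - K) := this
  have hSsym : Sᵀ = S := by
    have := hsym 0 (by simp)
    simpa using this.symm
  have hanti : ∀ K : Matrix (Fin m) (Fin m) ℝ, Kᵀ = -K → K * S + S * K = 0 := by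
    intro K hK
    have h1 := hsym K hK
    rw [hSsym] at h1
    have h2 : (1 + K) * S * (1 + K) - (1 - K) * S * (1 - K)
        = (K * S + S * K) + (K * S + S * K) := by noncomm_ring
    rw [h1, sub_self] at h2
    have h3 : (2:ℝ) • (K * S + S * K) = 0 := by rw [two_smul]; exact h2.symm
    exact (smul_eq_zero.mp h3).resolve_left (by norm_num)
  exact hS (stmt6aux_C hm S hanti)

theorem stmt6aux_D1 (x y : Fin m → ℝ) (hx : x ≠ 0)
    (hy' : y - ((x ⬝ᵥ y) / (x ⬝ᵥ x)) • x ≠ 0) :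
    x ⬝ᵥ (vecMulVec x (y - ((x ⬝ᵥ y) / (x ⬝ᵥ x)) • x)
      - vecMulVec (y - ((x ⬝ᵥ y) / (x ⬝ᵥ x)) • x) x).mulVec y ≠ 0 := by
  set y' := y - ((x ⬝ᵥ y) / (x ⬝ᵥ x)) • x with hy'def
  have hxx : x ⬝ᵥ x ≠ 0 := fun h => hx (dotProduct_self_eq_zero.mp h)
  have hxy' : x ⬝ᵥ y' = 0 := by
    rw [hy'def, dotProduct_sub, dotProduct_smul, smul_eq_mul]
    field_simp
    ring
  have hy'y : y' ⬝ᵥ y = y' ⬝ᵥ y' := by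
    have : y = y' + ((x ⬝ᵥ y) / (x ⬝ᵥ x)) • x := by rw [hy'def]; abel
    rw [this, dotProduct_add, dotProduct_smul]
    have : y' ⬝ᵥ x = 0 := by rw [dotProduct_comm]; exact hxy'
    rw [this]
    simp
  rw [stmt6aux_Kxy_mulVec, dotProduct_sub, dotProduct_smul, dotProduct_smul,
    hxy', hy'y]
  simp only [smul_eq_mul, mul_zero, sub_zero]
  intro hcon
  rcases mul_eq_zero.mp hcon with h | h
  · exact hy' (dotProduct_self_eq_zero.mp h)
  · exact hxx h

theorem stmt6aux_D (hm : 3 ≤ m) (a w : Fin m → ℝ) (ha : a ≠ 0) (hw : w ≠ 0) :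
    ∃ K A : Matrix (Fin m) (Fin m) ℝ, Kᵀ = -K ∧ Aᵀ = -A ∧
      a ⬝ᵥ ((1 - K) * A * (1 - K)).mulVec w ≠ 0 := by
  -- reduction of the dot product
  have hred : ∀ K A : Matrix (Fin m) (Fin m) ℝ, Kᵀ = -K →
      a ⬝ᵥ ((1 - K) * A * (1 - K)).mulVec w
        = ((1 + K).mulVec a) ⬝ᵥ (A.mulVec ((1 - K).mulVec w)) := by
    intro K A hK
    have htr : (1 - K)ᵀ = 1 + K := by
      rw [transpose_sub, transpose_one, hK, sub_neg_eq_add]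
    have h2 : a ᵥ* (1 - K) = (1 + K) *ᵥ a := by
      rw [← htr]
      conv_lhs => rw [← transpose_transpose (1 - K)]
      rw [vecMul_transpose]
    rw [← mulVec_mulVec, ← mulVec_mulVec, dotProduct_mulVec a (1 - K), h2]
  by_cases hpar : ∃ t : ℝ, a = t • w
  · -- parallel case
    obtain ⟨t, hat⟩ := hpar
    have ht : t ≠ 0 := by rintro rfl; simp at hat; exact ha hat
    obtain ⟨β, hβ⟩ := Function.ne_iff.mp hw
    simp only [Pi.zero_apply] at hβ
    obtain ⟨γ, hγβ, _⟩ := stmt6aux_exists_third hm β β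
    set z : Fin m → ℝ := w β • Pi.single (M := fun _ => ℝ) γ 1 - w γ • Pi.single (M := fun _ => ℝ) β 1 with hzdef
    have hwz : w ⬝ᵥ z = 0 := by
      rw [hzdef, dotProduct_sub, dotProduct_smul, dotProduct_smul,
        dotProduct_single, dotProduct_single]
      simp [mul_comm]
    have hz : z ≠ 0 := by
      intro h
      have h0 := congrFun h γ
      simp only [hzdef, Pi.sub_apply, Pi.smul_apply, Pi.single_apply, Pi.zero_apply,
        smul_eq_mul, if_pos rfl, if_neg hγβ, mul_one, mul_zero, sub_zero, if_true] at h0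
      exact hβ h0
    have hd : z ⬝ᵥ z ≠ 0 := fun h => hz (dotProduct_self_eq_zero.mp h)
    have hc : w ⬝ᵥ w ≠ 0 := fun h => hw (dotProduct_self_eq_zero.mp h)
    set K : Matrix (Fin m) (Fin m) ℝ := vecMulVec z w - vecMulVec w z with hKdef
    have hK : Kᵀ = -K := stmt6aux_Kxy_anti z w
    set x : Fin m → ℝ := (1 + K).mulVec a with hxdef
    set y : Fin m → ℝ := (1 - K).mulVec w with hydef
    have hzw : z ⬝ᵥ w = 0 := by rw [dotProduct_comm]; exact hwz
    have hxval : x = t • w + (t * (w ⬝ᵥ w)) • z := by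
      rw [hxdef, add_mulVec, one_mulVec, hKdef, stmt6aux_Kxy_mulVec, hat]
      rw [dotProduct_smul, dotProduct_smul, hzw]
      simp only [smul_eq_mul, mul_zero, zero_smul, sub_zero, smul_smul]
    have hyval : y = w - (w ⬝ᵥ w) • z := by
      rw [hydef, sub_mulVec, one_mulVec, hKdef, stmt6aux_Kxy_mulVec, hzw]
      simp
    -- dot products with w and z
    have hwx : w ⬝ᵥ x = t * (w ⬝ᵥ w) := by
      rw [hxval, dotProduct_add, dotProduct_smul, dotProduct_smul, hwz]
      simp
    have hzx : z ⬝ᵥ x = t * (w ⬝ᵥ w) * (z ⬝ᵥ z) := by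
      rw [hxval, dotProduct_add, dotProduct_smul, dotProduct_smul, hzw]
      simp [mul_assoc]
    have hwy : w ⬝ᵥ y = w ⬝ᵥ w := by
      rw [hyval, dotProduct_sub, dotProduct_smul, hwz]
      simp
    have hzy : z ⬝ᵥ y = -((w ⬝ᵥ w) * (z ⬝ᵥ z)) := by
      rw [hyval, dotProduct_sub, dotProduct_smul, hzw]
      simp
    have hxne : x ≠ 0 := by
      intro h
      rw [h] at hwx
      simp at hwx
      rcases hwx with h' | h'
      · exact ht h'
      · exact hw h'
    have hy'ne : y - ((x ⬝ᵥ y) / (x ⬝ᵥ x)) • x ≠ 0 := by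
      intro h
      set ρ := (x ⬝ᵥ y) / (x ⬝ᵥ x) with hρ
      have hyx : y = ρ • x := sub_eq_zero.mp h
      have e1 : w ⬝ᵥ y = ρ * (w ⬝ᵥ x) := by rw [hyx, dotProduct_smul]; simp
      have e2 : z ⬝ᵥ y = ρ * (z ⬝ᵥ x) := by rw [hyx, dotProduct_smul]; simp
      rw [hwy, hwx] at e1
      rw [hzy, hzx] at e2
      have hfac : (ρ * t - 1) * (w ⬝ᵥ w) = 0 := by linear_combination (-1 : ℝ) * e1
      have hρt : ρ * t = 1 := by
        rcases mul_eq_zero.mp hfac with h' | h'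
        · linarith
        · exact absurd h' hc
      have hcd : -((w ⬝ᵥ w) * (z ⬝ᵥ z)) = (w ⬝ᵥ w) * (z ⬝ᵥ z) := by
        calc -((w ⬝ᵥ w) * (z ⬝ᵥ z)) = ρ * (t * (w ⬝ᵥ w) * (z ⬝ᵥ z)) := e2
          _ = (ρ * t) * ((w ⬝ᵥ w) * (z ⬝ᵥ z)) := by ring
          _ = (w ⬝ᵥ w) * (z ⬝ᵥ z) := by rw [hρt]; ring
      have : (w ⬝ᵥ w) * (z ⬝ᵥ z) = 0 := by linarith
      exact (mul_ne_zero hc hd) this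
    refine ⟨K, _, hK, stmt6aux_Kxy_anti x (y - ((x ⬝ᵥ y) / (x ⬝ᵥ x)) • x), ?_⟩
    rw [hred K _ hK]
    rw [← hxdef, ← hydef]
    exact stmt6aux_D1 x y hxne hy'ne
  · -- non-parallel case : K = 0
    have hy'ne : w - ((a ⬝ᵥ w) / (a ⬝ᵥ a)) • a ≠ 0 := by
      intro h
      set c := (a ⬝ᵥ w) / (a ⬝ᵥ a) with hc
      have hwc : w = c • a := sub_eq_zero.mp h
      have hcne : c ≠ 0 := by
        intro h0
        rw [h0, zero_smul] at hwc
        exact hw hwc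
      exact hpar ⟨c⁻¹, by rw [hwc, smul_smul, inv_mul_cancel₀ hcne, one_smul]⟩
    refine ⟨0, _, by simp, stmt6aux_Kxy_anti a (w - ((a ⬝ᵥ w) / (a ⬝ᵥ a)) • a), ?_⟩
    rw [hred 0 _ (by simp)]
    simp only [add_zero, sub_zero, one_mulVec]
    exact stmt6aux_D1 a w ha hy'ne

abbrev S6Idx (m : ℕ) := (Fin m × Fin m) ⊕ (Fin m × Fin m)

noncomputable def S6XK (m : ℕ) : Matrix (Fin m) (Fin m) (MvPolynomial (S6Idx m) ℝ) :=
  Matrix.of fun i j => X (Sum.inl (i, j)) - X (Sum.inl (j, i))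

noncomputable def S6XA (m : ℕ) : Matrix (Fin m) (Fin m) (MvPolynomial (S6Idx m) ℝ) :=
  Matrix.of fun i j => X (Sum.inr (i, j)) - X (Sum.inr (j, i))

noncomputable def S6PM (m : ℕ) : Matrix (Fin m) (Fin m) (MvPolynomial (S6Idx m) ℝ) :=
  (1 - S6XK m) * S6XA m * (1 - S6XK m)

def S6K (m : ℕ) (x : S6Idx m → ℝ) : Matrix (Fin m) (Fin m) ℝ :=
  Matrix.of fun i j => x (Sum.inl (i, j)) - x (Sum.inl (j, i))

def S6A (m : ℕ) (x : S6Idx m → ℝ) : Matrix (Fin m) (Fin m) ℝ :=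
  Matrix.of fun i j => x (Sum.inr (i, j)) - x (Sum.inr (j, i))

def S6M (m : ℕ) (x : S6Idx m → ℝ) : Matrix (Fin m) (Fin m) ℝ :=
  (1 - S6K m x) * S6A m x * (1 - S6K m x)

theorem S6K_anti (m : ℕ) (x : S6Idx m → ℝ) : (S6K m x)ᵀ = -(S6K m x) := by
  ext i j; simp [S6K]

theorem S6A_anti (m : ℕ) (x : S6Idx m → ℝ) : (S6A m x)ᵀ = -(S6A m x) := by
  ext i j; simp [S6A]

theorem S6PM_eval (m : ℕ) (x : S6Idx m → ℝ) :
    (S6PM m).map (MvPolynomial.eval x) = S6M m x := by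
  have key : ∀ N : Matrix (Fin m) (Fin m) (MvPolynomial (S6Idx m) ℝ),
      N.map (MvPolynomial.eval x) = (MvPolynomial.eval x).mapMatrix N := fun N => rfl
  rw [key, S6PM, S6M, _root_.map_mul, _root_.map_mul, _root_.map_sub, _root_.map_one]
  have hK : (MvPolynomial.eval x).mapMatrix (S6XK m) = S6K m x := by
    ext i j; simp [S6XK, S6K, RingHom.mapMatrix_apply]
  have hA : (MvPolynomial.eval x).mapMatrix (S6XA m) = S6A m x := by
    ext i j; simp [S6XA, S6A, RingHom.mapMatrix_apply]
  rw [hK, hA]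

theorem S6PM_eval_entry (m : ℕ) (x : S6Idx m → ℝ) (i j : Fin m) :
    MvPolynomial.eval x (S6PM m i j) = S6M m x i j := by
  have := congrFun (congrFun (S6PM_eval m x) i) j
  simpa [Matrix.map_apply] using this

theorem S6_encode (m : ℕ) (K A : Matrix (Fin m) (Fin m) ℝ) (hK : Kᵀ = -K) (hA : Aᵀ = -A) :
    S6K m (Sum.elim (fun p => K p.1 p.2 / 2) (fun p => A p.1 p.2 / 2)) = K ∧
    S6A m (Sum.elim (fun p => K p.1 p.2 / 2) (fun p => A p.1 p.2 / 2)) = A := by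
  constructor
  · ext i j
    have h := congrFun (congrFun hK i) j
    simp only [transpose_apply, Matrix.neg_apply] at h
    simp [S6K]
    linarith
  · ext i j
    have h := congrFun (congrFun hA i) j
    simp only [transpose_apply, Matrix.neg_apply] at h
    simp [S6A]
    linarith

noncomputable def S6Fp {m : ℕ} (sr : Fin m → Fin m → ℝ) (cr : ℝ) : MvPolynomial (S6Idx m) ℝ :=
  (∑ l, ∑ i, C (sr l i) * S6PM m i l) - C cr

noncomputable def S6Gp {m : ℕ} (v w : Fin m → ℝ) : MvPolynomial (S6Idx m) ℝ :=
  ∑ p, ∑ q, C (v p * w q) * S6PM m p q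

theorem S6Fp_eval {m : ℕ} (sr : Fin m → Fin m → ℝ) (cr : ℝ) (x : S6Idx m → ℝ) :
    MvPolynomial.eval x (S6Fp sr cr) = (∑ l, ∑ i, sr l i * S6M m x i l) - cr := by
  simp [S6Fp, S6PM_eval_entry]

theorem S6Gp_eval {m : ℕ} (v w : Fin m → ℝ) (x : S6Idx m → ℝ) :
    MvPolynomial.eval x (S6Gp v w) = ∑ p, ∑ q, v p * w q * S6M m x p q := by
  simp [S6Gp, S6PM_eval_entry]

theorem S6dot_expand {m : ℕ} (v w : Fin m → ℝ) (N : Matrix (Fin m) (Fin m) ℝ) :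
    v ⬝ᵥ N.mulVec w = ∑ p, ∑ q, v p * w q * N p q := by
  simp only [dotProduct, mulVec, Finset.mul_sum]
  exact Finset.sum_congr rfl fun p _ => Finset.sum_congr rfl fun q _ => by ring

theorem S6sum_eq {m : ℕ} (sr : Fin m → Fin m → ℝ) (N : Matrix (Fin m) (Fin m) ℝ) :
    ∑ l, sr l ⬝ᵥ N.mulVec (Pi.single l 1) = ∑ l, ∑ i, sr l i * N i l := by
  refine Finset.sum_congr rfl fun l _ => ?_
  have h : N.mulVec (Pi.single l 1) = fun i => N i l := by
    ext i; simp [mulVec, dotProduct_single]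
  rw [h]
  simp [dotProduct]

theorem S6trace_eq {m : ℕ} (sr : Fin m → Fin m → ℝ) (N : Matrix (Fin m) (Fin m) ℝ) :
    ((Matrix.of fun i l => sr l i)ᵀ * N).trace = ∑ l, ∑ i, sr l i * N i l := by
  simp only [Matrix.trace, Matrix.diag, mul_apply, transpose_apply, Matrix.of_apply]

theorem S6Fp_ne {m : ℕ} (hm : 3 ≤ m) (sr : Fin m → (Fin m → ℝ)) (cr : ℝ)
    (hsr : ∃ l, sr l ≠ 0) : S6Fp sr cr ≠ 0 := by
  intro h0
  by_cases hc : cr = 0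
  · set S : Matrix (Fin m) (Fin m) ℝ := Matrix.of (fun i l => sr l i) with hSdef
    have hS : S ≠ 0 := by
      obtain ⟨l, hl⟩ := hsr
      obtain ⟨i, hi⟩ := Function.ne_iff.mp hl
      intro h
      apply hi
      have := congrFun (congrFun h i) l
      simpa [hSdef] using this
    obtain ⟨K, A, hK, hA, htr⟩ := stmt6aux_B hm S hS
    set x₀ : S6Idx m → ℝ := Sum.elim (fun p : Fin m × Fin m => K p.1 p.2 / 2)
      (fun p : Fin m × Fin m => A p.1 p.2 / 2) with hx₀
    obtain ⟨hKenc, hAenc⟩ := S6_encode m K A hK hA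
    apply htr
    have he := congrArg (MvPolynomial.eval x₀) h0
    rw [S6Fp_eval, map_zero] at he
    have hM : S6M m x₀ = (1 - K) * A * (1 - K) := by
      rw [S6M, hx₀, hKenc, hAenc]
    rw [hM, hc, sub_zero] at he
    rw [hSdef, S6trace_eq]
    exact he
  · have he := congrArg (MvPolynomial.eval (fun _ => 0)) h0
    rw [S6Fp_eval, map_zero] at he
    have hA0 : S6A m (fun _ => 0) = 0 := by ext i j; simp [S6A]
    have hM : S6M m (fun _ => 0) = 0 := by rw [S6M, hA0, mul_zero, zero_mul]
    rw [hM] at he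
    simp only [Matrix.zero_apply, mul_zero, Finset.sum_const_zero, zero_sub, neg_eq_zero] at he
    exact hc he

theorem S6Gp_ne {m : ℕ} (hm : 3 ≤ m) (v w : Fin m → ℝ) (hv : v ≠ 0) (hw : w ≠ 0) :
    S6Gp v w ≠ 0 := by
  intro h0
  obtain ⟨K, A, hK, hA, hdot⟩ := stmt6aux_D hm v w hv hw
  set x₀ : S6Idx m → ℝ := Sum.elim (fun p : Fin m × Fin m => K p.1 p.2 / 2)
    (fun p : Fin m × Fin m => A p.1 p.2 / 2) with hx₀
  obtain ⟨hKenc, hAenc⟩ := S6_encode m K A hK hA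
  apply hdot
  have he := congrArg (MvPolynomial.eval x₀) h0
  rw [S6Gp_eval, map_zero] at he
  have hM : S6M m x₀ = (1 - K) * A * (1 - K) := by
    rw [S6M, hx₀, hKenc, hAenc]
  rw [S6dot_expand, ← hM]
  exact he

end Stmt6Aux

open Matrix MvPolynomial

/-- Given `m ≥ 3`, a countably linear set `S ⊆ M_m(ℝ)`, distinct nonzero vectors
`u₁,…,u_k ∈ ℝ^m`, and an ergodic measure-preserving `ℝ^m`-action for which every vector off a
countable family of hyperplanes through the origin generates an ergodic transformation, there
are `M ∉ S` and `P ∈ SO(m)` with `MᵗP` antisymmetric such that all `T_{Mu_i}` and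
`T_{M(u_i−u_j)}` (`i ≠ j`) are ergodic. -/
theorem stmt6 (m k : ℕ) (hm : 3 ≤ m)
    {X : Type*} [MeasurableSpace X] (μ : Measure X) [IsProbabilityMeasure μ]
    (T : (Fin m → ℝ) → X → X)
    (hmp : ∀ v, MeasurePreserving (T v) μ μ)
    (hT0 : T 0 = id) (hTadd : ∀ v w, T (v + w) = T v ∘ T w)
    (herg : ∀ A : Set X, MeasurableSet A → (∀ v, T v ⁻¹' A = A) → μ A = 0 ∨ μ A = 1)
    -- Pugh–Shub: off a countable family of hyperplanes through the origin, `T_v` is ergodic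
    (a : ℕ → (Fin m → ℝ)) (ha : ∀ i, a i ≠ 0)
    (hPS : ∀ v : Fin m → ℝ, v ∉ (⋃ i, {w : Fin m → ℝ | dotProduct (a i) w = 0}) →
      Ergodic (T v) μ)
    -- `S` is countably linear
    (S : Set (Matrix (Fin m) (Fin m) ℝ))
    (s : ℕ → Fin m → (Fin m → ℝ)) (c : ℕ → ℝ) (hs : ∀ r, ∃ l, s r l ≠ 0)
    (hScover : S ⊆ ⋃ r, {N : Matrix (Fin m) (Fin m) ℝ |
      ∑ l, dotProduct (s r l) (N.mulVec (Pi.single l 1)) = c r})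
    (u : Fin k → (Fin m → ℝ)) (hu : ∀ i, u i ≠ 0)
    (huij : ∀ i j, i ≠ j → u i ≠ u j) :
    ∃ M P : Matrix (Fin m) (Fin m) ℝ, M ∉ S ∧
      P ∈ Matrix.specialOrthogonalGroup (Fin m) ℝ ∧
      (M.transpose * P).transpose = -(M.transpose * P) ∧
      (∀ i, Ergodic (T (M.mulVec (u i))) μ) ∧
      (∀ i j, i ≠ j → Ergodic (T (M.mulVec (u i - u j))) μ) := by
  classical
  -- the three countable families of bad parameter sets
  set BadF : Set (S6Idx m → ℝ) :=
    ⋃ r, {x | MvPolynomial.eval x (S6Fp (s r) (c r)) = 0} with hBadF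
  set BadG : Set (S6Idx m → ℝ) :=
    ⋃ (i : ℕ), ⋃ (j : Fin k), {x | MvPolynomial.eval x (S6Gp (a i) (u j)) = 0} with hBadG
  set BadH : Set (S6Idx m → ℝ) :=
    ⋃ (i : ℕ), ⋃ (j : Fin k), ⋃ (l : Fin k),
      {x | j ≠ l ∧ MvPolynomial.eval x (S6Gp (a i) (u j - u l)) = 0} with hBadH
  have hvolF : volume BadF = 0 := by
    rw [hBadF]
    refine measure_iUnion_null fun r => ?_
    exact stmt6aux_null _ (S6Fp_ne hm (s r) (c r) (hs r))
  have hvolG : volume BadG = 0 := by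
    rw [hBadG]
    refine measure_iUnion_null fun i => measure_iUnion_null fun j => ?_
    exact stmt6aux_null _ (S6Gp_ne hm (a i) (u j) (ha i) (hu j))
  have hvolH : volume BadH = 0 := by
    rw [hBadH]
    refine measure_iUnion_null fun i => measure_iUnion_null fun j =>
      measure_iUnion_null fun l => ?_
    by_cases hjl : j = l
    · have : {x : S6Idx m → ℝ | j ≠ l ∧ MvPolynomial.eval x (S6Gp (a i) (u j - u l)) = 0}
          = ∅ := by
        ext x; simp [hjl]
      rw [this, measure_empty]
    · refine measure_mono_null (fun x hx => hx.2) ?_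
      exact stmt6aux_null _
        (S6Gp_ne hm (a i) (u j - u l) (ha i) (sub_ne_zero_of_ne (huij j l hjl)))
  have huniv : volume (Set.univ : Set (S6Idx m → ℝ)) ≠ 0 := by
    rw [MeasureTheory.volume_pi, MeasureTheory.Measure.pi_univ]
    simp only [Real.volume_univ, Finset.prod_const]
    exact pow_ne_zero _ ENNReal.top_ne_zero
  obtain ⟨x, hx⟩ : ∃ x : S6Idx m → ℝ, x ∉ BadF ∪ BadG ∪ BadH := by
    by_contra h
    push_neg at h
    have hsub : (Set.univ : Set (S6Idx m → ℝ)) ⊆ BadF ∪ BadG ∪ BadH := fun x _ => h x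
    exact huniv (measure_mono_null hsub
      (le_antisymm (le_trans (measure_union_le _ _)
        (by rw [le_antisymm (le_trans (measure_union_le _ _)
              (by rw [hvolF, hvolG, add_zero] : volume BadF + volume BadG ≤ 0) : volume (BadF ∪ BadG) ≤ 0) (zero_le), hvolH, add_zero])) (zero_le)))
  simp only [Set.mem_union, not_or] at hx
  obtain ⟨⟨hxF, hxG⟩, hxH⟩ := hx
  have hxF' : ∀ r, MvPolynomial.eval x (S6Fp (s r) (c r)) ≠ 0 := fun r h =>
    hxF (by rw [hBadF]; exact Set.mem_iUnion.mpr ⟨r, h⟩)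
  have hxG' : ∀ (i : ℕ) (j : Fin k), MvPolynomial.eval x (S6Gp (a i) (u j)) ≠ 0 :=
    fun i j h => hxG (by
      rw [hBadG]; exact Set.mem_iUnion.mpr ⟨i, Set.mem_iUnion.mpr ⟨j, h⟩⟩)
  have hxH' : ∀ (i : ℕ) (j l : Fin k), j ≠ l →
      MvPolynomial.eval x (S6Gp (a i) (u j - u l)) ≠ 0 :=
    fun i j l hjl h => hxH (by
      rw [hBadH]
      exact Set.mem_iUnion.mpr ⟨i, Set.mem_iUnion.mpr ⟨j, Set.mem_iUnion.mpr ⟨l, hjl, h⟩⟩⟩)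
  -- now assemble the matrices
  set K := S6K m x with hKdef
  set A := S6A m x with hAdef
  set M := S6M m x with hMdef
  have hK : Kᵀ = -K := S6K_anti m x
  have hA : Aᵀ = -A := S6A_anti m x
  have hdetp : IsUnit (1 + K).det := stmt6aux_det_unit hK
  have hdetm : IsUnit (1 - K).det := stmt6aux_det_unit' hK
  have htrp : (1 + K)ᵀ = 1 - K := by
    rw [transpose_add, transpose_one, hK, ← sub_eq_add_neg]
  have htrm : (1 - K)ᵀ = 1 + K := by
    rw [transpose_sub, transpose_one, hK, sub_neg_eq_add]
  have hcomm : (1 - K) * (1 + K) = (1 + K) * (1 - K) := by noncomm_ring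
  set P : Matrix (Fin m) (Fin m) ℝ := (1 - K) * (1 + K)⁻¹ with hPdef
  have hPT : Pᵀ = (1 - K)⁻¹ * (1 + K) := by
    rw [hPdef, transpose_mul, transpose_nonsing_inv, htrp, htrm]
  have hMK : M = (1 - K) * A * (1 - K) := by rw [hMdef, S6M]
  refine ⟨M, P, ?_, ?_, ?_, ?_, ?_⟩
  · -- M ∉ S
    intro hMS
    obtain ⟨t, ⟨r, rfl⟩, hr⟩ := hScover hMS
    apply hxF' r
    rw [S6Fp_eval, sub_eq_zero, ← S6sum_eq]
    exact hr
  · -- P ∈ SO(m)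
    rw [Matrix.mem_specialOrthogonalGroup_iff]
    constructor
    · rw [Matrix.mem_orthogonalGroup_iff]
      have hstar : star P = Pᵀ := by
        rw [Matrix.star_eq_conjTranspose]
        ext i j
        simp [Matrix.conjTranspose_apply]
      rw [hPT]
      have hinvcomm : (1 + K)⁻¹ * (1 - K)⁻¹ = (1 - K)⁻¹ * (1 + K)⁻¹ := by
        rw [← Matrix.mul_inv_rev, ← Matrix.mul_inv_rev, hcomm]
      calc P * ((1 - K)⁻¹ * (1 + K))
          = (1 - K) * ((1 + K)⁻¹ * (1 - K)⁻¹) * (1 + K) := by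
            rw [hPdef]; noncomm_ring
        _ = (1 - K) * ((1 - K)⁻¹ * (1 + K)⁻¹) * (1 + K) := by rw [hinvcomm]
        _ = ((1 - K) * (1 - K)⁻¹) * ((1 + K)⁻¹ * (1 + K)) := by noncomm_ring
        _ = 1 := by
            rw [Matrix.mul_nonsing_inv _ hdetm, Matrix.nonsing_inv_mul _ hdetp, one_mul]
    · rw [hPdef, Matrix.det_mul, Matrix.det_nonsing_inv]
      have : (1 + K).det = (1 - K).det := by rw [← Matrix.det_transpose (1 + K), htrp]
      rw [this, Ring.mul_inverse_cancel _ hdetm]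
  · -- antisymmetry of MᵀP
    have hMT : Mᵀ = (1 + K) * (-A) * (1 + K) := by
      rw [hMK, transpose_mul, transpose_mul, htrm, hA]
      noncomm_ring
    have hcancel : (1 + K) * ((1 - K) * (1 + K)⁻¹) = 1 - K := by
      rw [← mul_assoc, ← hcomm, mul_assoc, Matrix.mul_nonsing_inv _ hdetp, mul_one]
    have hMTP : Mᵀ * P = -((1 + K) * A * (1 - K)) := by
      calc Mᵀ * P = ((1 + K) * (-A)) * ((1 + K) * ((1 - K) * (1 + K)⁻¹)) := by
            rw [hMT, hPdef]; noncomm_ring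
        _ = ((1 + K) * (-A)) * (1 - K) := by rw [hcancel]
        _ = -((1 + K) * A * (1 - K)) := by noncomm_ring
    rw [hMTP]
    rw [transpose_neg, transpose_mul, transpose_mul, htrm, htrp, hA]
    noncomm_ring
  · -- ergodicity for M uᵢ
    intro i
    apply hPS
    intro hmem
    simp only [Set.mem_iUnion, Set.mem_setOf_eq] at hmem
    obtain ⟨j, hj⟩ := hmem
    apply hxG' j i
    rw [S6Gp_eval, ← S6dot_expand]
    exact hj
  · -- ergodicity for M (uᵢ - uⱼ)
    intro i j hij
    apply hPS
    intro hmem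
    simp only [Set.mem_iUnion, Set.mem_setOf_eq] at hmem
    obtain ⟨l, hl⟩ := hmem
    apply hxH' l i j hij
    rw [S6Gp_eval, ← S6dot_expand]
    exact hl
end
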